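/- For n ≥ 2, the element ζ_n = Σ_{i=1}^n y_1 ∧ … ∧ ŷ_i ∧ … ∧ y_n ∧ y_{n+1} ∧ … ∧ ŷ_{n+i} ∧ … ∧ y_{2n} ∈ ∧^{2n-2}(I_n) (where hats denote omitted factors) is h̄_n-invariant. -/

import Mathlib

open ExteriorAlgebra

noncomputable section

/-! ### The derivation extension of an endomorphism to the exterior algebra -/

variable {M : Type*} [AddCommGroup M] [Module ℝ M]

/-- Auxiliary linear map used to build the derivation extension of `f` on the
exterior algebra: `m ↦ [[ι m, ι (f m)], [0, ι m]]`. -/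
def derivAux (f : M →ₗ[ℝ] M) :
    M →ₗ[ℝ] Matrix (Fin 2) (Fin 2) (ExteriorAlgebra ℝ M) where
  toFun m := !![ι ℝ m, ι ℝ (f m); 0, ι ℝ m]
  map_add' x y := by
    ext i j
    fin_cases i <;> fin_cases j <;> simp
  map_smul' r x := by
    ext i j
    fin_cases i <;> fin_cases j <;> simp

theorem derivAux_sq (f : M →ₗ[ℝ] M) (m : M) : derivAux f m * derivAux f m = 0 := by
  ext i j
  fin_cases i <;> fin_cases j <;>
    simp [derivAux, Matrix.mul_apply, Fin.sum_univ_two, ι_sq_zero, ι_add_mul_swap]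

/-- The degree-zero derivation of the exterior algebra `⋀ M` extending the endomorphism
`f` of the module `M` of generators; on a pure wedge it acts by
`v₁ ∧ ⋯ ∧ vₖ ↦ ∑ᵢ v₁ ∧ ⋯ ∧ f vᵢ ∧ ⋯ ∧ vₖ` (the action of `f ∈ 𝔤` on `⋀ M` induced by a
representation of a Lie algebra `𝔤` on `M`). -/
def derivExt (f : M →ₗ[ℝ] M) :
    ExteriorAlgebra ℝ M →ₗ[ℝ] ExteriorAlgebra ℝ M where
  toFun x := ExteriorAlgebra.lift ℝ ⟨derivAux f, derivAux_sq f⟩ x 0 1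
  map_add' x y := by simp [Matrix.add_apply]
  map_smul' r x := by simp [Matrix.smul_apply]

/-- The wedge product of a list of vectors of `M`, as an element of the exterior
algebra of `M`. -/
def wedgeL (l : List M) : ExteriorAlgebra ℝ M := (l.map (ι ℝ)).prod

/-! ### The representation `I_n` of `h̄_n = so(n) ⊕ sl(2,ℝ)`

We realize `I_n = I_n¹ ⊕ I_n² = ℝⁿ ⊕ ℝⁿ` as `Fin n → ℝ × ℝ`, with
`y i = Pi.single i (1,0)` (the vector field `xᵢ ∂/∂x^{n+1}`, a Galilean boost) and
`y' i = Pi.single i (0,1)` (the vector field `xᵢ ∂/∂x^{n+2}`, a space translation);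
`h̄_n` is realized, via its faithful standard representation, as the span inside
`End(I_n)` of the generators `XEnd i j` (rotations, spanning `so(n)`) and
`aEnd`, `bEnd`, `cEnd` (spanning `sl(2,ℝ)`). -/

/-- The module `I_n = ℝⁿ ⊕ ℝⁿ`. -/
abbrev In (n : ℕ) := Fin n → ℝ × ℝ

/-- `y i = xᵢ ∂/∂x^{n+1}`, the basis of the first copy `I_n¹`. -/
def yb {n : ℕ} (i : Fin n) : In n := Pi.single i (1, 0)

/-- `y (n+i) = xᵢ ∂/∂x^{n+2}`, the basis of the second copy `I_n²`. -/
def yb' {n : ℕ} (i : Fin n) : In n := Pi.single i (0, 1)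

/-- The rotation generator `X_{ij} ∈ so(n)` acting on `Fin n → W`:
`eᵢ w ↦ eⱼ w`, `eⱼ w ↦ - eᵢ w`. -/
def rotEnd {n : ℕ} {W : Type*} [AddCommGroup W] [Module ℝ W] (i j : Fin n) :
    (Fin n → W) →ₗ[ℝ] (Fin n → W) where
  toFun v := Pi.single j (v i) - Pi.single i (v j)
  map_add' x y := by
    simp only [Pi.add_apply, Pi.single_add]
    abel
  map_smul' r x := by
    simp only [Pi.smul_apply, Pi.single_smul, RingHom.id_apply, smul_sub]

/-- The action of the rotation generator `X_{ij} ∈ so(n) ⊆ h̄_n` on `I_n`: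
`y i ↦ y j`, `y j ↦ - y i`, and similarly on the second copy `I_n²`. -/
def XEnd {n : ℕ} (i j : Fin n) : In n →ₗ[ℝ] In n := rotEnd i j

/-- The action of `a_n ∈ sl(2,ℝ) ⊆ h̄_n` on `I_n`: `y i ↦ y i`, `y (n+i) ↦ - y (n+i)`. -/
def aEnd (n : ℕ) : In n →ₗ[ℝ] In n where
  toFun v := fun k => ((v k).1, -(v k).2)
  map_add' x y := by funext k; simp [Prod.ext_iff]; try ring
  map_smul' r x := by funext k; simp [Prod.ext_iff]; try ring

/-- The action of `b_n ∈ sl(2,ℝ) ⊆ h̄_n` on `I_n`: `y i ↦ - y (n+i)`, `y (n+i) ↦ 0`. -/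
def bEnd (n : ℕ) : In n →ₗ[ℝ] In n where
  toFun v := fun k => (0, -(v k).1)
  map_add' x y := by funext k; simp [Prod.ext_iff]; try ring
  map_smul' r x := by funext k; simp [Prod.ext_iff]; try ring

/-- The action of `c_n ∈ sl(2,ℝ) ⊆ h̄_n` on `I_n`: `y i ↦ 0`, `y (n+i) ↦ y i`. -/
def cEnd (n : ℕ) : In n →ₗ[ℝ] In n where
  toFun v := fun k => ((v k).2, 0)
  map_add' x y := by funext k; simp [Prod.ext_iff]; try ring
  map_smul' r x := by funext k; simp [Prod.ext_iff]; try ring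

/-- The generating set of (the image in `End(I_n)` of) `h̄_n = so(n) ⊕ sl(2,ℝ)`. -/
def hbarGens (n : ℕ) : Set (In n →ₗ[ℝ] In n) :=
  {aEnd n, bEnd n, cEnd n} ∪ {f | ∃ i j : Fin n, i < j ∧ f = XEnd i j}

/-- `h̄_n = so(n) ⊕ sl(2,ℝ)`, realized (via its faithful standard representation)
as the span of its generators inside `End(I_n)`. -/
def hbar (n : ℕ) : Submodule ℝ (In n →ₗ[ℝ] In n) := Submodule.span ℝ (hbarGens n)

/-- `ζ_n = ∑ᵢ y₁ ∧ ⋯ ∧ ŷᵢ ∧ ⋯ ∧ yₙ ∧ y_{n+1} ∧ ⋯ ∧ ŷ_{n+i} ∧ ⋯ ∧ y_{2n} ∈ ⋀^{2n-2}(I_n)`,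
where hats denote omitted factors. -/
def zetaEl (n : ℕ) : ExteriorAlgebra ℝ (In n) :=
  ∑ i : Fin n,
    wedgeL (((List.finRange n).filter (· ≠ i)).map yb ++
            ((List.finRange n).filter (· ≠ i)).map yb')

section DerivBasic
variable {M : Type*} [AddCommGroup M] [Module ℝ M]

lemma lift_derivAux_shape (f : M →ₗ[ℝ] M) (x : ExteriorAlgebra ℝ M) :
    ExteriorAlgebra.lift ℝ ⟨derivAux f, derivAux_sq f⟩ x 0 0 = x ∧
    ExteriorAlgebra.lift ℝ ⟨derivAux f, derivAux_sq f⟩ x 1 1 = x ∧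
    ExteriorAlgebra.lift ℝ ⟨derivAux f, derivAux_sq f⟩ x 1 0 = 0 := by
  induction x using ExteriorAlgebra.induction with
  | algebraMap r =>
      rw [AlgHom.commutes]
      simp [Matrix.algebraMap_matrix_apply]
  | ι m => simp [ExteriorAlgebra.lift_ι_apply, derivAux]
  | mul x y hx hy =>
      simp only [map_mul, Matrix.mul_apply, Fin.sum_univ_two, hx.1, hx.2.1, hx.2.2,
        hy.1, hy.2.1, hy.2.2]
      refine ⟨by simp, by simp, by simp⟩
  | add x y hx hy =>
      simp only [map_add, Matrix.add_apply, hx.1, hx.2.1, hx.2.2, hy.1, hy.2.1, hy.2.2]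
      exact ⟨trivial, trivial, by simp⟩

lemma derivExt_mul (f : M →ₗ[ℝ] M) (x y : ExteriorAlgebra ℝ M) :
    derivExt f (x * y) = derivExt f x * y + x * derivExt f y := by
  show (ExteriorAlgebra.lift ℝ ⟨derivAux f, derivAux_sq f⟩ (x * y)) 0 1 = _
  rw [map_mul, Matrix.mul_apply, Fin.sum_univ_two,
    (lift_derivAux_shape f x).1, (lift_derivAux_shape f y).2.1]
  exact add_comm _ _

lemma derivExt_ι (f : M →ₗ[ℝ] M) (m : M) : derivExt f (ι ℝ m) = ι ℝ (f m) := by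
  show (ExteriorAlgebra.lift ℝ ⟨derivAux f, derivAux_sq f⟩ (ι ℝ m)) 0 1 = _
  simp [ExteriorAlgebra.lift_ι_apply, derivAux]

lemma derivExt_one (f : M →ₗ[ℝ] M) : derivExt f (1 : ExteriorAlgebra ℝ M) = 0 := by
  show (ExteriorAlgebra.lift ℝ ⟨derivAux f, derivAux_sq f⟩ 1) 0 1 = 0
  rw [map_one]
  simp [Matrix.one_apply]

end DerivBasic
section Wedge
variable {M : Type*} [AddCommGroup M] [Module ℝ M]

lemma wedgeL_ofFn {k : ℕ} (v : Fin k → M) :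
    wedgeL (List.ofFn v) = ExteriorAlgebra.ιMulti ℝ k v := by
  rw [ExteriorAlgebra.ιMulti_apply, wedgeL, List.map_ofFn]
  rfl

lemma vecTail_update_succ {k : ℕ} (v : Fin (k+1) → M) (t : Fin k) (x : M) :
    Matrix.vecTail (Function.update v t.succ x) = Function.update (Matrix.vecTail v) t x := by
  funext s
  simp [Matrix.vecTail, Function.update_apply, Fin.succ_inj]

lemma derivExt_ιMulti (f : M →ₗ[ℝ] M) {k : ℕ} (v : Fin k → M) :
    derivExt f (ExteriorAlgebra.ιMulti ℝ k v) =
      ∑ t : Fin k, ExteriorAlgebra.ιMulti ℝ k (Function.update v t (f (v t))) := by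
  induction k with
  | zero => simpa using derivExt_one f
  | succ k ih =>
      rw [ExteriorAlgebra.ιMulti_succ_apply, derivExt_mul, derivExt_ι, ih, Finset.mul_sum,
        Fin.sum_univ_succ]
      congr 1
      · have h0 : Matrix.vecTail (Function.update v 0 (f (v 0))) = Matrix.vecTail v := by
          funext s
          simp [Matrix.vecTail, Function.update_apply, Fin.succ_ne_zero]
        rw [ExteriorAlgebra.ιMulti_succ_apply (Function.update v 0 (f (v 0))), h0,
          Function.update_self]
      · refine Finset.sum_congr rfl fun t _ => ?_
        rw [ExteriorAlgebra.ιMulti_succ_apply (Function.update v t.succ (f (v t.succ))),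
          vecTail_update_succ, Function.update_of_ne (Fin.succ_ne_zero t).symm]
        first
        | done
        | rfl

lemma update_append_left {m k : ℕ} (u : Fin m → M) (v : Fin k → M) (t : Fin m) (x : M) :
    Function.update (Fin.append u v) (Fin.castAdd k t) x
      = Fin.append (Function.update u t x) v := by
  funext s
  induction s using Fin.addCases with
  | left s =>
      simp only [Fin.append_left, Function.update_apply, Fin.ext_iff, Fin.coe_castAdd]
      first
      | done
      | split_ifs <;> first | rfl | omega
  | right s =>
      simp only [Fin.append_right, Function.update_apply, Fin.ext_iff, Fin.coe_castAdd,
        Fin.coe_natAdd]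
      first
      | done
      | split_ifs <;> first | rfl | omega

lemma update_append_right {m k : ℕ} (u : Fin m → M) (v : Fin k → M) (t : Fin k) (x : M) :
    Function.update (Fin.append u v) (Fin.natAdd m t) x
      = Fin.append u (Function.update v t x) := by
  funext s
  induction s using Fin.addCases with
  | left s =>
      simp only [Fin.append_left, Function.update_apply, Fin.ext_iff, Fin.coe_castAdd,
        Fin.coe_natAdd]
      first
      | done
      | split_ifs <;> first | rfl | omega
  | right s =>
      simp only [Fin.append_right, Function.update_apply, Fin.ext_iff, Fin.coe_natAdd]
      first
      | done
      | split_ifs <;> first | rfl | omega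

lemma ιMulti_append_comp_left {m : ℕ} (u v : Fin m → M) (σ : Equiv.Perm (Fin m)) :
    ExteriorAlgebra.ιMulti ℝ (m + m) (Fin.append (u ∘ σ) v) =
      Equiv.Perm.sign σ • ExteriorAlgebra.ιMulti ℝ (m + m) (Fin.append u v) := by
  have hτ : Fin.append u v ∘
      (finSumFinEquiv.permCongr (Equiv.sumCongr σ (Equiv.refl (Fin m))))
        = Fin.append (u ∘ σ) v := by
    funext x
    induction x using Fin.addCases with
    | left a => simp [Equiv.permCongr_apply, Fin.append_left]
    | right b =>
        rw [Function.comp_apply, Equiv.permCongr_apply, finSumFinEquiv_symm_apply_natAdd]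
        simp only [Equiv.sumCongr_apply, Sum.map_inr, id_eq, finSumFinEquiv_apply_right]
        rw [Fin.append_right, Fin.append_right]
        rfl
  rw [← hτ, AlternatingMap.map_perm, Equiv.Perm.sign_permCongr, Equiv.Perm.sign_sumCongr]
  simp

lemma ιMulti_append_comp_right {m : ℕ} (u v : Fin m → M) (σ : Equiv.Perm (Fin m)) :
    ExteriorAlgebra.ιMulti ℝ (m + m) (Fin.append u (v ∘ σ)) =
      Equiv.Perm.sign σ • ExteriorAlgebra.ιMulti ℝ (m + m) (Fin.append u v) := by
  have hτ : Fin.append u v ∘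
      (finSumFinEquiv.permCongr (Equiv.sumCongr (Equiv.refl (Fin m)) σ))
        = Fin.append u (v ∘ σ) := by
    funext x
    induction x using Fin.addCases with
    | left a => simp [Equiv.permCongr_apply, Fin.append_left]
    | right b =>
        rw [Function.comp_apply, Equiv.permCongr_apply, finSumFinEquiv_symm_apply_natAdd]
        simp only [Equiv.sumCongr_apply, Sum.map_inr, id_eq, finSumFinEquiv_apply_right]
        rw [Fin.append_right, Fin.append_right]
        rfl
  rw [← hτ, AlternatingMap.map_perm, Equiv.Perm.sign_permCongr, Equiv.Perm.sign_sumCongr]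
  simp

end Wedge
section Rep

lemma succAbove_val {m : ℕ} (p : Fin (m+1)) (k : Fin m) :
    ((p.succAbove k : Fin (m+1)) : ℕ) = if (k:ℕ) < (p:ℕ) then (k:ℕ) else (k:ℕ)+1 := by
  rw [Fin.succAbove]
  split_ifs with h1 h2 h3
  · rfl
  · exact absurd (by exact_mod_cast h1) h2
  · exact absurd (by simpa [Fin.lt_def] using h3) h1
  · rfl

lemma aEnd_yb {n : ℕ} (x : Fin n) : aEnd n (yb x) = yb x := by
  funext k
  by_cases h : k = x <;> simp [aEnd, yb, Pi.single_apply, h, Prod.ext_iff]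

lemma aEnd_yb' {n : ℕ} (x : Fin n) : aEnd n (yb' x) = - yb' x := by
  funext k
  by_cases h : k = x <;> simp [aEnd, yb', Pi.single_apply, h, Prod.ext_iff]

lemma bEnd_yb {n : ℕ} (x : Fin n) : bEnd n (yb x) = - yb' x := by
  funext k
  by_cases h : k = x <;> simp [bEnd, yb, yb', Pi.single_apply, h, Prod.ext_iff]

lemma bEnd_yb' {n : ℕ} (x : Fin n) : bEnd n (yb' x) = 0 := by
  funext k
  by_cases h : k = x <;> simp [bEnd, yb', Pi.single_apply, h, Prod.ext_iff]

lemma cEnd_yb {n : ℕ} (x : Fin n) : cEnd n (yb x) = 0 := by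
  funext k
  by_cases h : k = x <;> simp [cEnd, yb, Pi.single_apply, h, Prod.ext_iff]

lemma cEnd_yb' {n : ℕ} (x : Fin n) : cEnd n (yb' x) = yb x := by
  funext k
  by_cases h : k = x <;> simp [cEnd, yb, yb', Pi.single_apply, h, Prod.ext_iff]

lemma rotEnd_single {n : ℕ} (i j x : Fin n) (w : ℝ × ℝ) :
    rotEnd (W := ℝ × ℝ) i j (Pi.single x w)
      = (if x = i then Pi.single j w else 0) - (if x = j then Pi.single i w else 0) := by
  have e : rotEnd (W := ℝ × ℝ) i j (Pi.single x w)
      = Pi.single j ((Pi.single x w : Fin n → ℝ × ℝ) i) - Pi.single i ((Pi.single x w : Fin n → ℝ × ℝ) j) := rfl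
  rw [e]
  rcases eq_or_ne x i with rfl | h1 <;> rcases eq_or_ne x j with rfl | h2
  · simp
  · simp [Pi.single_eq_same, Pi.single_eq_of_ne (Ne.symm h2), h2]
  · simp [Pi.single_eq_same, Pi.single_eq_of_ne (Ne.symm h1), h1]
  · simp [Pi.single_eq_of_ne (Ne.symm h1), Pi.single_eq_of_ne (Ne.symm h2), h1, h2]

lemma XEnd_yb_of_ne {n : ℕ} {i j x : Fin n} (h1 : x ≠ i) (h2 : x ≠ j) :
    XEnd i j (yb x) = 0 := by
  show rotEnd i j (Pi.single x ((1:ℝ),(0:ℝ))) = 0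
  rw [rotEnd_single]
  simp [h1, h2]

lemma XEnd_yb_left {n : ℕ} {i j : Fin n} (h : i ≠ j) : XEnd i j (yb i) = yb j := by
  show rotEnd i j (Pi.single i ((1:ℝ),(0:ℝ))) = _
  rw [rotEnd_single]
  simp [h, yb]

lemma XEnd_yb_right {n : ℕ} {i j : Fin n} (h : i ≠ j) : XEnd i j (yb j) = - yb i := by
  show rotEnd i j (Pi.single j ((1:ℝ),(0:ℝ))) = _
  rw [rotEnd_single]
  simp [h.symm, yb]

lemma XEnd_yb'_of_ne {n : ℕ} {i j x : Fin n} (h1 : x ≠ i) (h2 : x ≠ j) :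
    XEnd i j (yb' x) = 0 := by
  show rotEnd i j (Pi.single x ((0:ℝ),(1:ℝ))) = 0
  rw [rotEnd_single]
  simp [h1, h2]

lemma XEnd_yb'_left {n : ℕ} {i j : Fin n} (h : i ≠ j) : XEnd i j (yb' i) = yb' j := by
  show rotEnd i j (Pi.single i ((0:ℝ),(1:ℝ))) = _
  rw [rotEnd_single]
  simp [h, yb']

lemma XEnd_yb'_right {n : ℕ} {i j : Fin n} (h : i ≠ j) : XEnd i j (yb' j) = - yb' i := by
  show rotEnd i j (Pi.single j ((0:ℝ),(1:ℝ))) = _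
  rw [rotEnd_single]
  simp [h.symm, yb']

end Rep
section Comb

/-- The cycle `(a, a+1, ..., b-1)` on `Fin m`: sends `k ↦ k+1` for `a ≤ k < b-1`,
`b-1 ↦ a`, and fixes everything else. -/
def cycPerm (m a b : ℕ) (hab : a < b) (hbm : b ≤ m) : Equiv.Perm (Fin m) where
  toFun k := if h1 : (k:ℕ) < a ∨ b ≤ (k:ℕ) then k
    else if h2 : (k:ℕ) + 1 = b then ⟨a, by omega⟩ else ⟨(k:ℕ)+1, by omega⟩
  invFun k := if h1 : (k:ℕ) < a ∨ b ≤ (k:ℕ) then k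
    else if h2 : (k:ℕ) = a then ⟨b-1, by omega⟩ else ⟨(k:ℕ)-1, by omega⟩
  left_inv k := by
    dsimp only
    by_cases h1 : (k:ℕ) < a ∨ b ≤ (k:ℕ)
    · rw [dif_pos h1, dif_pos h1]
    · rw [dif_neg h1]
      push_neg at h1
      by_cases h2 : (k:ℕ)+1 = b
      · rw [dif_pos h2]
        rw [dif_neg (by dsimp only; omega), dif_pos rfl]
        exact Fin.ext (by dsimp only; omega)
      · rw [dif_neg h2]
        rw [dif_neg (by dsimp only; omega), dif_neg (by dsimp only; omega)]
        exact Fin.ext (by dsimp only; omega)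
  right_inv k := by
    dsimp only
    by_cases h1 : (k:ℕ) < a ∨ b ≤ (k:ℕ)
    · rw [dif_pos h1, dif_pos h1]
    · rw [dif_neg h1]
      push_neg at h1
      by_cases h2 : (k:ℕ) = a
      · rw [dif_pos h2]
        rw [dif_neg (by dsimp only; omega), dif_pos (by dsimp only; omega)]
        exact Fin.ext (by dsimp only; omega)
      · rw [dif_neg h2]
        rw [dif_neg (by dsimp only; omega), dif_neg (by dsimp only; omega)]
        exact Fin.ext (by dsimp only; omega)

lemma cycPerm_val {m a b : ℕ} (hab : a < b) (hbm : b ≤ m) (k : Fin m) :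
    ((cycPerm m a b hab hbm k : Fin m) : ℕ)
      = if (k:ℕ) < a ∨ b ≤ (k:ℕ) then (k:ℕ)
        else if (k:ℕ) + 1 = b then a else (k:ℕ)+1 := by
  simp only [cycPerm, Equiv.coe_fn_mk]
  split_ifs <;> rfl

lemma cycPerm_inv_val {m a b : ℕ} (hab : a < b) (hbm : b ≤ m) (k : Fin m) :
    (((cycPerm m a b hab hbm)⁻¹ k : Fin m) : ℕ)
      = if (k:ℕ) < a ∨ b ≤ (k:ℕ) then (k:ℕ)
        else if (k:ℕ) = a then b-1 else (k:ℕ)-1 := by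
  simp only [Equiv.Perm.inv_def, cycPerm, Equiv.coe_fn_symm_mk]
  split_ifs <;> rfl

lemma succAbove_update {m : ℕ} (i j : Fin (m+1)) (hij : i < j) :
    ∃ (σ : Equiv.Perm (Fin m)) (t₀ s₀ : Fin m),
      i.succAbove t₀ = j ∧ j.succAbove s₀ = i ∧
      Function.update i.succAbove t₀ i = j.succAbove ∘ σ ∧
      Function.update j.succAbove s₀ j = i.succAbove ∘ ⇑σ⁻¹ := by
  have hij' : (i:ℕ) < (j:ℕ) := hij
  have hjm : (j:ℕ) ≤ m := by omega
  refine ⟨cycPerm m i j hij' hjm, ⟨(j:ℕ)-1, by omega⟩, ⟨(i:ℕ), by omega⟩, ?_, ?_, ?_, ?_⟩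
  · apply Fin.ext
    rw [succAbove_val]
    simp only
    split_ifs <;> omega
  · apply Fin.ext
    rw [succAbove_val]
    simp only
    split_ifs <;> omega
  · funext k
    rw [Function.comp_apply, Function.update_apply]
    apply Fin.ext
    rw [apply_ite (Fin.val), succAbove_val, succAbove_val, cycPerm_val]
    simp only [Fin.ext_iff]
    split_ifs <;> omega
  · funext k
    rw [Function.comp_apply, Function.update_apply]
    apply Fin.ext
    rw [apply_ite (Fin.val), succAbove_val, succAbove_val, cycPerm_inv_val]
    simp only [Fin.ext_iff]
    split_ifs <;> omega

lemma filter_finRange {m : ℕ} (i : Fin (m+1)) :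
    (List.finRange (m+1)).filter (· ≠ i) = List.ofFn i.succAbove := by
  have h1 : ((List.finRange (m+1)).filter (· ≠ i)).Nodup :=
    (List.nodup_finRange (m+1)).filter _
  have h2 : (List.ofFn i.succAbove).Nodup := by
    rw [List.ofFn_eq_map]
    exact (List.nodup_finRange m).map Fin.succAbove_right_injective
  haveI : IsAntisymm (Fin (m+1)) (· ≤ ·) := ⟨fun _ _ => le_antisymm⟩
  refine (fun hp s1 s2 => List.Perm.eq_of_pairwise (le := (· ≤ ·)) (fun _ _ _ _ => le_antisymm) s1 s2 hp) ((List.perm_ext_iff_of_nodup h1 h2).2 fun x => ?_) ?_ ?_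
  · simp only [List.mem_filter, List.mem_finRange, true_and, List.mem_ofFn, Set.mem_range,
      decide_eq_true_eq]
    constructor
    · intro hx
      exact Fin.exists_succAbove_eq hx
    · rintro ⟨t, rfl⟩
      exact Fin.succAbove_ne i t
  · exact ((List.pairwise_lt_finRange (m+1)).filter _).imp le_of_lt
  · rw [List.ofFn_eq_map]
    exact (List.Pairwise.map _ (fun a b h => (Fin.strictMono_succAbove i) h)
      (List.pairwise_lt_finRange m)).imp le_of_lt

/-- The tuple whose wedge is the `k`-th term of `ζ`. -/
def Wfun (m : ℕ) (k : Fin (m+1)) : Fin (m+m) → In (m+1) :=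
  Fin.append (yb ∘ k.succAbove) (yb' ∘ k.succAbove)

lemma Wfun_castAdd {m : ℕ} (k : Fin (m+1)) (t : Fin m) :
    Wfun m k (Fin.castAdd m t) = yb (k.succAbove t) := by
  rw [Wfun, Fin.append_left]
  rfl

lemma Wfun_natAdd {m : ℕ} (k : Fin (m+1)) (t : Fin m) :
    Wfun m k (Fin.natAdd m t) = yb' (k.succAbove t) := by
  rw [Wfun, Fin.append_right]
  rfl

lemma zeta_eq (m : ℕ) :
    zetaEl (m+1) = ∑ i : Fin (m+1), ExteriorAlgebra.ιMulti ℝ (m+m) (Wfun m i) := by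
  unfold zetaEl
  refine Finset.sum_congr rfl fun i _ => ?_
  rw [filter_finRange, List.map_ofFn, List.map_ofFn, ← List.ofFn_fin_append, wedgeL_ofFn]
  rfl

lemma derivExt_zeta (m : ℕ) (f : In (m+1) →ₗ[ℝ] In (m+1)) :
    derivExt f (zetaEl (m+1)) =
      ∑ k : Fin (m+1), ∑ t : Fin (m+m), ExteriorAlgebra.ιMulti ℝ (m+m)
        (Function.update (Wfun m k) t (f (Wfun m k t))) := by
  rw [zeta_eq, map_sum]
  exact Finset.sum_congr rfl fun k _ => derivExt_ιMulti f _

end Comb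
section Invariance

lemma castAdd_ne_natAdd {m : ℕ} (s t : Fin m) : Fin.castAdd m s ≠ Fin.natAdd m t := by
  intro hc
  have h' := congrArg Fin.val hc
  simp only [Fin.coe_castAdd, Fin.coe_natAdd] at h'
  have := s.isLt
  omega

lemma castAdd_ne_castAdd {m : ℕ} {s t : Fin m} (h : s ≠ t) :
    Fin.castAdd m s ≠ Fin.castAdd m t := by
  intro hc
  have h' := congrArg Fin.val hc
  simp only [Fin.coe_castAdd] at h'
  exact h (Fin.ext h')

lemma natAdd_ne_natAdd {m : ℕ} {s t : Fin m} (h : s ≠ t) :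
    Fin.natAdd m s ≠ Fin.natAdd m t := by
  intro hc
  have h' := congrArg Fin.val hc
  simp only [Fin.coe_natAdd] at h'
  exact h (Fin.ext (by omega))

lemma inv_aEnd (m : ℕ) : derivExt (aEnd (m+1)) (zetaEl (m+1)) = 0 := by
  rw [derivExt_zeta]
  refine Finset.sum_eq_zero fun k _ => ?_
  rw [Fin.sum_univ_add]
  have h1 : ∀ t : Fin m, ExteriorAlgebra.ιMulti ℝ (m+m)
      (Function.update (Wfun m k) (Fin.castAdd m t) (aEnd (m+1) (Wfun m k (Fin.castAdd m t))))
      = ExteriorAlgebra.ιMulti ℝ (m+m) (Wfun m k) := fun t => by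
    rw [Wfun_castAdd, aEnd_yb, ← Wfun_castAdd, Function.update_eq_self]
  have h2 : ∀ t : Fin m, ExteriorAlgebra.ιMulti ℝ (m+m)
      (Function.update (Wfun m k) (Fin.natAdd m t) (aEnd (m+1) (Wfun m k (Fin.natAdd m t))))
      = - ExteriorAlgebra.ιMulti ℝ (m+m) (Wfun m k) := fun t => by
    rw [Wfun_natAdd, aEnd_yb', AlternatingMap.map_update_neg, ← Wfun_natAdd,
      Function.update_eq_self]
  simp only [h1, h2, Finset.sum_const, Finset.card_univ, Fintype.card_fin, smul_neg]
  exact add_neg_cancel _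

lemma inv_bEnd (m : ℕ) : derivExt (bEnd (m+1)) (zetaEl (m+1)) = 0 := by
  rw [derivExt_zeta]
  refine Finset.sum_eq_zero fun k _ => Finset.sum_eq_zero fun t _ => ?_
  induction t using Fin.addCases with
  | left s =>
      rw [Wfun_castAdd, bEnd_yb, AlternatingMap.map_update_neg, neg_eq_zero]
      refine AlternatingMap.map_eq_zero_of_eq _ _ ?_ (castAdd_ne_natAdd s s)
      rw [Function.update_self, Function.update_of_ne (castAdd_ne_natAdd s s).symm, Wfun_natAdd]
  | right s =>
      rw [Wfun_natAdd, bEnd_yb', AlternatingMap.map_update_zero]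

lemma inv_cEnd (m : ℕ) : derivExt (cEnd (m+1)) (zetaEl (m+1)) = 0 := by
  rw [derivExt_zeta]
  refine Finset.sum_eq_zero fun k _ => Finset.sum_eq_zero fun t _ => ?_
  induction t using Fin.addCases with
  | left s =>
      rw [Wfun_castAdd, cEnd_yb, AlternatingMap.map_update_zero]
  | right s =>
      rw [Wfun_natAdd, cEnd_yb']
      refine AlternatingMap.map_eq_zero_of_eq _ _ ?_ (castAdd_ne_natAdd s s).symm
      rw [Function.update_self, Function.update_of_ne (castAdd_ne_natAdd s s), Wfun_castAdd]

lemma inv_XEnd (m : ℕ) (i j : Fin (m+1)) (hij : i < j) :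
    derivExt (XEnd i j) (zetaEl (m+1)) = 0 := by
  rw [derivExt_zeta]
  obtain ⟨σ, t₀, s₀, ht₀, hs₀, hP, hQ⟩ := succAbove_update i j hij
  have hne : i ≠ j := ne_of_lt hij
  set G : Fin (m+1) → ExteriorAlgebra ℝ (In (m+1)) := fun k =>
    ∑ t : Fin (m+m), ExteriorAlgebra.ιMulti ℝ (m+m)
      (Function.update (Wfun m k) t (XEnd i j (Wfun m k t))) with hG
  have hvan : ∀ k : Fin (m+1), k ≠ i → k ≠ j → G k = 0 := by
    intro k hki hkj
    obtain ⟨si, hsi⟩ := Fin.exists_succAbove_eq (Ne.symm hki)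
    obtain ⟨sj, hsj⟩ := Fin.exists_succAbove_eq (Ne.symm hkj)
    simp only [hG]
    refine Finset.sum_eq_zero fun t _ => ?_
    induction t using Fin.addCases with
    | left s =>
        rw [Wfun_castAdd]
        rcases eq_or_ne (k.succAbove s) i with hs | hs1
        · rw [hs, XEnd_yb_left hne]
          have hssj : s ≠ sj := fun hc => hne (by rw [← hs, hc, hsj])
          refine AlternatingMap.map_eq_zero_of_eq _ _ ?_
            (castAdd_ne_castAdd hssj).symm
          rw [Function.update_self,
            Function.update_of_ne (castAdd_ne_castAdd hssj.symm), Wfun_castAdd, hsj]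
        · rcases eq_or_ne (k.succAbove s) j with hs | hs2
          · rw [hs, XEnd_yb_right hne, AlternatingMap.map_update_neg, neg_eq_zero]
            have hssi : s ≠ si := fun hc => hne (by rw [← hsi, ← hc, hs])
            refine AlternatingMap.map_eq_zero_of_eq _ _ ?_
              (castAdd_ne_castAdd hssi).symm
            rw [Function.update_self,
              Function.update_of_ne (castAdd_ne_castAdd hssi.symm), Wfun_castAdd, hsi]
          · rw [XEnd_yb_of_ne hs1 hs2, AlternatingMap.map_update_zero]
    | right s =>
        rw [Wfun_natAdd]
        rcases eq_or_ne (k.succAbove s) i with hs | hs1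
        · rw [hs, XEnd_yb'_left hne]
          have hssj : s ≠ sj := fun hc => hne (by rw [← hs, hc, hsj])
          refine AlternatingMap.map_eq_zero_of_eq _ _ ?_
            (natAdd_ne_natAdd hssj).symm
          rw [Function.update_self,
            Function.update_of_ne (natAdd_ne_natAdd hssj.symm), Wfun_natAdd, hsj]
        · rcases eq_or_ne (k.succAbove s) j with hs | hs2
          · rw [hs, XEnd_yb'_right hne, AlternatingMap.map_update_neg, neg_eq_zero]
            have hssi : s ≠ si := fun hc => hne (by rw [← hsi, ← hc, hs])
            refine AlternatingMap.map_eq_zero_of_eq _ _ ?_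
              (natAdd_ne_natAdd hssi).symm
            rw [Function.update_self,
              Function.update_of_ne (natAdd_ne_natAdd hssi.symm), Wfun_natAdd, hsi]
          · rw [XEnd_yb'_of_ne hs1 hs2, AlternatingMap.map_update_zero]
  set A : ExteriorAlgebra ℝ (In (m+1)) := ExteriorAlgebra.ιMulti ℝ (m+m)
    (Fin.append (yb ∘ j.succAbove) (yb' ∘ i.succAbove)) with hA
  set B : ExteriorAlgebra ℝ (In (m+1)) := ExteriorAlgebra.ιMulti ℝ (m+m)
    (Fin.append (yb ∘ i.succAbove) (yb' ∘ j.succAbove)) with hB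
  have hGi : G i = -(Equiv.Perm.sign σ • A) + -(Equiv.Perm.sign σ • B) := by
    simp only [hG]
    rw [Fin.sum_univ_add]
    congr 1
    · rw [Finset.sum_eq_single t₀]
      · rw [Wfun_castAdd, ht₀, XEnd_yb_right hne, AlternatingMap.map_update_neg, neg_inj]
        show ExteriorAlgebra.ιMulti ℝ (m+m)
          (Function.update (Fin.append (yb ∘ i.succAbove) (yb' ∘ i.succAbove))
            (Fin.castAdd m t₀) (yb i)) = _
        rw [update_append_left]
        have hcomp : Function.update (yb ∘ i.succAbove) t₀ (yb i)
            = (yb ∘ j.succAbove) ∘ σ := by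
          rw [← Function.comp_update, hP]
          rfl
        rw [hcomp, ιMulti_append_comp_left]
      · intro s _ hs
        have h1 : i.succAbove s ≠ i := Fin.succAbove_ne i s
        have h2 : i.succAbove s ≠ j := fun hc => hs (Fin.succAbove_right_injective
          (p := i) (by rw [hc, ht₀]))
        rw [Wfun_castAdd, XEnd_yb_of_ne h1 h2, AlternatingMap.map_update_zero]
      · exact fun h => absurd (Finset.mem_univ _) h
    · rw [Finset.sum_eq_single t₀]
      · rw [Wfun_natAdd, ht₀, XEnd_yb'_right hne, AlternatingMap.map_update_neg, neg_inj]
        show ExteriorAlgebra.ιMulti ℝ (m+m)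
          (Function.update (Fin.append (yb ∘ i.succAbove) (yb' ∘ i.succAbove))
            (Fin.natAdd m t₀) (yb' i)) = _
        rw [update_append_right]
        have hcomp : Function.update (yb' ∘ i.succAbove) t₀ (yb' i)
            = (yb' ∘ j.succAbove) ∘ σ := by
          rw [← Function.comp_update, hP]
          rfl
        rw [hcomp, ιMulti_append_comp_right]
      · intro s _ hs
        have h1 : i.succAbove s ≠ i := Fin.succAbove_ne i s
        have h2 : i.succAbove s ≠ j := fun hc => hs (Fin.succAbove_right_injective
          (p := i) (by rw [hc, ht₀]))
        rw [Wfun_natAdd, XEnd_yb'_of_ne h1 h2, AlternatingMap.map_update_zero]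
      · exact fun h => absurd (Finset.mem_univ _) h
  have hGj : G j = (Equiv.Perm.sign σ⁻¹ • B) + (Equiv.Perm.sign σ⁻¹ • A) := by
    simp only [hG]
    rw [Fin.sum_univ_add]
    congr 1
    · rw [Finset.sum_eq_single s₀]
      · rw [Wfun_castAdd, hs₀, XEnd_yb_left hne]
        show ExteriorAlgebra.ιMulti ℝ (m+m)
          (Function.update (Fin.append (yb ∘ j.succAbove) (yb' ∘ j.succAbove))
            (Fin.castAdd m s₀) (yb j)) = _
        rw [update_append_left]
        have hcomp : Function.update (yb ∘ j.succAbove) s₀ (yb j)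
            = (yb ∘ i.succAbove) ∘ ⇑σ⁻¹ := by
          rw [← Function.comp_update, hQ]
          rfl
        rw [hcomp, ιMulti_append_comp_left]
      · intro s _ hs
        have h1 : j.succAbove s ≠ j := Fin.succAbove_ne j s
        have h2 : j.succAbove s ≠ i := fun hc => hs (Fin.succAbove_right_injective
          (p := j) (by rw [hc, hs₀]))
        rw [Wfun_castAdd, XEnd_yb_of_ne h2 h1, AlternatingMap.map_update_zero]
      · exact fun h => absurd (Finset.mem_univ _) h
    · rw [Finset.sum_eq_single s₀]
      · rw [Wfun_natAdd, hs₀, XEnd_yb'_left hne]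
        show ExteriorAlgebra.ιMulti ℝ (m+m)
          (Function.update (Fin.append (yb ∘ j.succAbove) (yb' ∘ j.succAbove))
            (Fin.natAdd m s₀) (yb' j)) = _
        rw [update_append_right]
        have hcomp : Function.update (yb' ∘ j.succAbove) s₀ (yb' j)
            = (yb' ∘ i.succAbove) ∘ ⇑σ⁻¹ := by
          rw [← Function.comp_update, hQ]
          rfl
        rw [hcomp, ιMulti_append_comp_right]
      · intro s _ hs
        have h1 : j.succAbove s ≠ j := Fin.succAbove_ne j s
        have h2 : j.succAbove s ≠ i := fun hc => hs (Fin.succAbove_right_injective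
          (p := j) (by rw [hc, hs₀]))
        rw [Wfun_natAdd, XEnd_yb'_of_ne h2 h1, AlternatingMap.map_update_zero]
      · exact fun h => absurd (Finset.mem_univ _) h
  have hsplit : ∑ k : Fin (m+1), G k = G i + G j := by
    rw [← Finset.sum_pair hne]
    refine (Finset.sum_subset (Finset.subset_univ _) fun k _ hk => ?_).symm
    simp only [Finset.mem_insert, Finset.mem_singleton, not_or] at hk
    exact hvan k hk.1 hk.2
  rw [hsplit, hGi, hGj, Equiv.Perm.sign_inv]
  abel

end Invariance

/-- For `n ≥ 2`, the element `ζ_n ∈ ⋀^{2n-2}(I_n)` is `h̄_n`-invariant. -/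
theorem zeta_invariant (n : ℕ) (hn : 2 ≤ n) :
    ∀ f ∈ hbar n, derivExt f (zetaEl n) = 0 := by
  obtain ⟨m, rfl⟩ : ∃ m, n = m + 1 := ⟨n - 1, by omega⟩
  intro f hf
  induction hf using Submodule.span_induction with
  | mem g hg =>
      rcases hg with (rfl | rfl | rfl) | ⟨i, j, hij, rfl⟩
      · exact inv_aEnd m
      · exact inv_bEnd m
      · exact inv_cEnd m
      · exact inv_XEnd m i j hij
  | zero =>
      rw [derivExt_zeta]
      refine Finset.sum_eq_zero fun k _ => Finset.sum_eq_zero fun t _ => ?_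
      rw [LinearMap.zero_apply, AlternatingMap.map_update_zero]
  | add x y hx hy ihx ihy =>
      rw [derivExt_zeta] at ihx ihy ⊢
      simp only [LinearMap.add_apply, AlternatingMap.map_update_add]
      simp only [Finset.sum_add_distrib]
      rw [ihx, ihy, add_zero]
  | smul r x hx ih =>
      rw [derivExt_zeta] at ih ⊢
      simp only [LinearMap.smul_apply, AlternatingMap.map_update_smul, ← Finset.smul_sum]
      rw [ih, smul_zero]
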